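/- Let (R, ι, σ) be an object of alg_{A/End_k(A)}, and let I be the right ideal of R ⊗_k R generated by the elements ι(a)⊗1 − 1⊗ι(a), a ∈ A. Then for every x ∈ P(R) and all a, a' ∈ A: (x⊗1 + 1⊗x)·(ι(a)⊗1 − 1⊗ι(a)) ∈ I and (ι(a')⊗1)·(ι(a)⊗1 − 1⊗ι(a)) ∈ I. Consequently the sub-A-module R̃ of R⊗_k R generated by the elements ι(a)⊗1 (a ∈ A) and x⊗1 + 1⊗x (x ∈ P(R)) is contained in the normalizer of the right ideal I (R̃·I ⊆ I). -/

import Mathlib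

open TensorProduct

/-- The set of primitive elements of an object `(R, ι, σ)` of `alg_{A/End_k(A)}`:
`P(R) = { r ∈ R | r·ι(a) − ι(a)·r = ι(σ(r)(a)) for all a ∈ A }`. -/
def Prim (k : Type*) {A R : Type*} [CommRing k] [CommRing A] [Algebra k A]
    [Ring R] [Algebra k R] (ι : A →ₐ[k] R) (σ : R →ₐ[k] Module.End k A) : Set R :=
  {r | ∀ a : A, r * ι a - ι a * r = ι (σ r a)}

/-- Let `(R, ι, σ)` be an object of `alg_{A/End_k(A)}`, and let `I` be the right ideal of
`R ⊗_k R` generated by the elements `ι(a)⊗1 − 1⊗ι(a)`, `a ∈ A`.  Then for every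
`x ∈ P(R)` and all `a, a' ∈ A`:
`(x⊗1 + 1⊗x)·(ι(a)⊗1 − 1⊗ι(a)) ∈ I` and `(ι(a')⊗1)·(ι(a)⊗1 − 1⊗ι(a)) ∈ I`.
Consequently the sub-`A`-module `R̃` of `R⊗_k R` generated by the elements `ι(a)⊗1`
(`a ∈ A`) and `x⊗1 + 1⊗x` (`x ∈ P(R)`) — with `A` acting by left multiplication by
`ι(a)⊗1` — is contained in the normalizer of the right ideal `I` (`R̃·I ⊆ I`). -/
theorem stmt_4 (k A R : Type*) [Field k] [CharZero k] [CommRing A] [Algebra k A]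
    [Ring R] [Algebra k R] (ι : A →ₐ[k] R) (σ : R →ₐ[k] Module.End k A)
    (hσ : ∀ (a : A) (r : R), σ (ι a * r) = (Algebra.lmul k A a) * σ r) :
    -- `gen a = ι(a)⊗1 − 1⊗ι(a)`
    let gen : A → R ⊗[k] R := fun a => ι a ⊗ₜ[k] (1 : R) - (1 : R) ⊗ₜ[k] ι a
    -- `I` is the right ideal generated by the `gen a`
    let I : AddSubgroup (R ⊗[k] R) :=
      AddSubgroup.closure {y | ∃ (a : A) (r : R ⊗[k] R), y = gen a * r}
    -- `R̃` is the sub-A-module generated by the `ι(a)⊗1` and the `x⊗1 + 1⊗x`, `x ∈ P(R)`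
    let Rt : AddSubgroup (R ⊗[k] R) :=
      AddSubgroup.closure {y | ∃ a : A,
        (∃ b : A, y = (ι a ⊗ₜ[k] (1 : R)) * (ι b ⊗ₜ[k] (1 : R))) ∨
        (∃ x ∈ Prim k ι σ,
          y = (ι a ⊗ₜ[k] (1 : R)) * (x ⊗ₜ[k] (1 : R) + (1 : R) ⊗ₜ[k] x))}
    (∀ x ∈ Prim k ι σ, ∀ a : A,
      (x ⊗ₜ[k] (1 : R) + (1 : R) ⊗ₜ[k] x) * gen a ∈ I) ∧
    (∀ a' a : A, (ι a' ⊗ₜ[k] (1 : R)) * gen a ∈ I) ∧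
    (∀ r ∈ Rt, ∀ i ∈ I, r * i ∈ I) := by
  intro gen I Rt
  -- basic membership
  have memI : ∀ (a : A) (r : R ⊗[k] R), gen a * r ∈ I := fun a r =>
    AddSubgroup.subset_closure ⟨a, r, rfl⟩
  -- I is stable under right multiplication
  have rightI : ∀ i ∈ I, ∀ s : R ⊗[k] R, i * s ∈ I := by
    intro i hi s
    induction hi using AddSubgroup.closure_induction with
    | mem y hy => obtain ⟨a, r, rfl⟩ := hy; rw [mul_assoc]; exact memI a (r * s)
    | zero => simpa using zero_mem I
    | add y z _ _ hy hz => rw [add_mul]; exact add_mem hy hz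
    | neg y _ hy => rw [neg_mul]; exact neg_mem hy
  -- primitive elements
  have prim : ∀ x ∈ Prim k ι σ, ∀ a : A,
      (x ⊗ₜ[k] (1 : R) + (1 : R) ⊗ₜ[k] x) * gen a ∈ I := by
    intro x hx a
    have h1 : x * ι a = ι (σ x a) + ι a * x := by rw [← hx a]; abel
    have key : (x ⊗ₜ[k] (1 : R) + (1 : R) ⊗ₜ[k] x) * gen a
        = gen a * (x ⊗ₜ[k] (1 : R) + (1 : R) ⊗ₜ[k] x) + gen (σ x a) * 1 := by
      simp only [gen, mul_sub, sub_mul, add_mul, mul_add, mul_one,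
        Algebra.TensorProduct.tmul_mul_tmul, one_mul, h1]
      simp only [TensorProduct.add_tmul, TensorProduct.tmul_add]
      abel
    rw [key]
    exact add_mem (memI a _) (memI (σ x a) 1)
  -- the a' statement
  have comm : ∀ a' a : A, (ι a' ⊗ₜ[k] (1 : R)) * gen a ∈ I := by
    intro a' a
    have key : (ι a' ⊗ₜ[k] (1 : R)) * gen a = gen a * (ι a' ⊗ₜ[k] (1 : R)) := by
      simp only [gen, mul_sub, sub_mul, Algebra.TensorProduct.tmul_mul_tmul, one_mul,
        mul_one, ← map_mul, mul_comm a' a]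
    rw [key]; exact memI a _
  refine ⟨prim, comm, ?_⟩
  -- left mult by ι a ⊗ 1 preserves I
  have leftI : ∀ a : A, ∀ i ∈ I, (ι a ⊗ₜ[k] (1 : R)) * i ∈ I := by
    intro a i hi
    induction hi using AddSubgroup.closure_induction with
    | mem y hy =>
      obtain ⟨b, r, rfl⟩ := hy
      rw [← mul_assoc]
      exact rightI _ (comm a b) r
    | zero => simpa using zero_mem I
    | add y z _ _ hy hz => rw [mul_add]; exact add_mem hy hz
    | neg y _ hy => rw [mul_neg]; exact neg_mem hy
  intro r hr
  induction hr using AddSubgroup.closure_induction with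
  | mem y hy =>
    intro i hi
    obtain ⟨a, hy⟩ := hy
    rcases hy with ⟨b, rfl⟩ | ⟨x, hx, rfl⟩
    · rw [mul_assoc]
      exact leftI a _ (leftI b _ hi)
    · rw [mul_assoc]
      refine leftI a _ ?_
      -- (x⊗1+1⊗x) * i ∈ I
      induction hi using AddSubgroup.closure_induction with
      | mem y hy =>
        obtain ⟨b, s, rfl⟩ := hy
        rw [← mul_assoc]
        exact rightI _ (prim x hx b) s
      | zero => simpa using zero_mem I
      | add y z _ _ hy hz => rw [mul_add]; exact add_mem hy hz
      | neg y _ hy => rw [mul_neg]; exact neg_mem hy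
  | zero => intro i hi; simpa using zero_mem I
  | add y z _ _ hy hz => intro i hi; rw [add_mul]; exact add_mem (hy i hi) (hz i hi)
  | neg y _ hy => intro i hi; rw [neg_mul]; exact neg_mem (hy i hi)
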